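/- Consider the matching-pennies game with optimizer utility matrix A = [[1, −1], [−1, 1]]. For every η > 0 and T > 0, the optimal continuous-time reward of an optimizer against a learner using the Replicator Dynamics with parameter η and zero initial history is zero: R*_cont(0, T) = 0. Equivalently, max_{x ∈ Δ_2} (1/η)·[ ln 2 − ln( e^{−ηT(x_1 − x_2)} + e^{ηT(x_1 − x_2)} ) ] = 0. -/

import Mathlib

open MeasureTheory

/-- Componentwise cumulative play of a continuous-time strategy: `∫_0^t x(s) ds`. -/
noncomputable def cumX {n : ℕ} (x : ℝ → Fin n → ℝ) (t : ℝ) (k : Fin n) : ℝ :=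
  ∫ s in (0:ℝ)..t, x s k

/-- The Replicator Dynamics learner's mixed strategy at time `t`. -/
noncomputable def contPlay {n m : ℕ} (η : ℝ) (A : Matrix (Fin n) (Fin m) ℝ)
    (h0 : Fin m → ℝ) (x : ℝ → Fin n → ℝ) (t : ℝ) (i : Fin m) : ℝ :=
  Real.exp (η * (h0 i - ∑ k, cumX x t k * A k i)) /
    ∑ j, Real.exp (η * (h0 j - ∑ k, cumX x t k * A k j))

/-- The optimizer's continuous-time reward against the Replicator Dynamics. -/
noncomputable def Rcont {n m : ℕ} (η : ℝ) (A : Matrix (Fin n) (Fin m) ℝ)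
    (h0 : Fin m → ℝ) (T : ℝ) (x : ℝ → Fin n → ℝ) : ℝ :=
  ∫ t in (0:ℝ)..T, ∑ k, ∑ i, x t k * A k i * contPlay η A h0 x t i

/-- The optimal continuous-time reward. -/
noncomputable def RcontStar {n m : ℕ} (η : ℝ) (A : Matrix (Fin n) (Fin m) ℝ)
    (h0 : Fin m → ℝ) (T : ℝ) : ℝ :=
  sSup {r | ∃ x : ℝ → Fin n → ℝ, Measurable x ∧
    (∀ t ∈ Set.Icc (0:ℝ) T, x t ∈ stdSimplex ℝ (Fin n)) ∧ r = Rcont η A h0 T x}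

open intervalIntegral

/-- The matching-pennies optimizer utility matrix. -/
noncomputable def MP : Matrix (Fin 2) (Fin 2) ℝ := !![1, -1; -1, 1]



noncomputable def phiF (η v : ℝ) : ℝ := 1 - 2 / (Real.exp (2*η*v) + 1)

lemma phiF_mono {η : ℝ} (hη : 0 ≤ η) : Monotone (phiF η) := by
  intro a b hab
  have h1 : (0:ℝ) < Real.exp (2*η*a) + 1 := by positivity
  have h2 : Real.exp (2*η*a) + 1 ≤ Real.exp (2*η*b) + 1 := by
    have := Real.exp_le_exp.2 (by nlinarith : 2*η*a ≤ 2*η*b)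
    linarith
  have := div_le_div_of_nonneg_left (by norm_num : (0:ℝ) ≤ 2) h1 h2
  simp only [phiF]; linarith

lemma phiF_abs_le (η v : ℝ) : |phiF η v| ≤ 1 := by
  have h1 : (0:ℝ) < Real.exp (2*η*v) + 1 := by positivity
  have h2 : 2 / (Real.exp (2*η*v) + 1) ≤ 2 := by
    rw [div_le_iff₀ h1]; nlinarith [Real.exp_pos (2*η*v)]
  have h3 : 0 < 2 / (Real.exp (2*η*v) + 1) := by positivity
  rw [abs_le]; constructor <;> simp only [phiF] <;> linarith

lemma phiF_zero (η : ℝ) : phiF η 0 = 0 := by norm_num [phiF]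

lemma phiF_hasDerivAt (η v : ℝ) :
    HasDerivAt (phiF η) (2 * (Real.exp (2*η*v) * (2*η)) / (Real.exp (2*η*v) + 1)^2) v := by
  have h1 : HasDerivAt (fun v : ℝ => Real.exp (2*η*v) + 1) (Real.exp (2*η*v) * (2*η)) v := by
    have := ((hasDerivAt_id v).const_mul (2*η)).exp
    simpa using this.add_const 1
  have h2 : (Real.exp (2*η*v) + 1) ≠ 0 := by positivity
  have h3 := (h1.inv h2).const_mul (2:ℝ)
  have h4 := h3.const_sub (1:ℝ)
  have heq : phiF η = fun x => 1 - 2 * (Real.exp (2*η*x) + 1)⁻¹ := by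
    funext w; simp [phiF, div_eq_mul_inv]
  rw [heq]
  exact h4.congr_deriv (by ring)

lemma phiF_deriv_bound {η : ℝ} (hη : 0 ≤ η) (v : ℝ) :
    |2 * (Real.exp (2*η*v) * (2*η)) / (Real.exp (2*η*v) + 1)^2| ≤ η := by
  have h1 : (0:ℝ) < Real.exp (2*η*v) := Real.exp_pos _
  rw [abs_of_nonneg (by positivity), div_le_iff₀ (by positivity)]
  nlinarith [sq_nonneg (Real.exp (2*η*v) - 1)]

lemma phiF_lip {η : ℝ} (hη : 0 ≤ η) (a b : ℝ) : |phiF η a - phiF η b| ≤ η * |a - b| := by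
  have := Convex.norm_image_sub_le_of_norm_hasDerivWithin_le
    (f := phiF η) (f' := fun v => 2 * (Real.exp (2*η*v) * (2*η)) / (Real.exp (2*η*v) + 1)^2)
    (C := η) (s := Set.univ)
    (fun x _ => (phiF_hasDerivAt η x).hasDerivWithinAt)
    (fun x _ => by rw [Real.norm_eq_abs]; exact phiF_deriv_bound hη x)
    convex_univ (Set.mem_univ b) (Set.mem_univ a)
  simpa [Real.norm_eq_abs] using this

lemma phiF_cont (η : ℝ) : Continuous (phiF η) := by
  apply Continuous.sub continuous_const
  apply Continuous.div continuous_const (by continuity)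
  intro v; positivity

noncomputable def PhiF (η v : ℝ) : ℝ := ∫ s in (0:ℝ)..v, phiF η s

lemma phiF_intable (η a b : ℝ) : IntervalIntegrable (phiF η) volume a b :=
  (phiF_cont η).intervalIntegrable a b

lemma PhiF_sub (η a b : ℝ) : PhiF η b - PhiF η a = ∫ s in a..b, phiF η s := by
  rw [PhiF, PhiF, integral_interval_sub_left (phiF_intable η 0 b) (phiF_intable η 0 a)]

lemma PhiF_sub_le {η : ℝ} (hη : 0 ≤ η) (a b : ℝ) :
    PhiF η b - PhiF η a ≤ phiF η b * (b - a) := by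
  rw [PhiF_sub]
  rcases le_total a b with h | h
  · calc ∫ s in a..b, phiF η s ≤ ∫ _ in a..b, phiF η b := by
          apply integral_mono_on h (phiF_intable η a b) (intervalIntegrable_const)
          intro s hs; exact phiF_mono hη hs.2
        _ = phiF η b * (b - a) := by simp [mul_comm]
  · rw [integral_symm]
    have : ∫ _ in b..a, phiF η b ≤ ∫ s in b..a, phiF η s := by
      apply integral_mono_on h intervalIntegrable_const (phiF_intable η b a)
      intro s hs; exact phiF_mono hη hs.1
    simp only [intervalIntegral.integral_const, smul_eq_mul] at this
    nlinarith

lemma PhiF_nonneg {η : ℝ} (hη : 0 ≤ η) (v : ℝ) : 0 ≤ PhiF η v := by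
  rcases le_total 0 v with h | h
  · apply intervalIntegral.integral_nonneg h
    intro s hs
    have := phiF_mono hη hs.1
    rwa [phiF_zero] at this
  · rw [PhiF, integral_symm]
    simp only [neg_nonneg]
    have h0 : (∫ s in v..(0:ℝ), phiF η s) ≤ ∫ _ in v..(0:ℝ), (0:ℝ) := by
      apply integral_mono_on h (phiF_intable η v 0) intervalIntegrable_const
      intro s hs
      have := phiF_mono hη hs.2
      rwa [phiF_zero] at this
    simpa using h0


lemma bdd_intable {g : ℝ → ℝ} (hg : Measurable g) (hb : ∀ t, |g t| ≤ 1) (a b : ℝ) :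
    IntervalIntegrable g volume a b := by
  apply (_root_.intervalIntegrable_const (c := (1:ℝ))).mono_fun hg.aestronglyMeasurable
  filter_upwards with t
  simpa [Real.norm_eq_abs] using hb t

lemma key_ineq (η T : ℝ) (hη : 0 < η) (hT : 0 < T) (g : ℝ → ℝ) (hg : Measurable g)
    (hb : ∀ t, |g t| ≤ 1) :
    0 ≤ ∫ t in (0:ℝ)..T, g t * phiF η (∫ s in (0:ℝ)..t, g s) := by
  set u : ℝ → ℝ := fun t => ∫ s in (0:ℝ)..t, g s with hu
  have hgi : ∀ a b : ℝ, IntervalIntegrable g volume a b := bdd_intable hg hb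
  have hucont : Continuous u := intervalIntegral.continuous_primitive hgi 0
  have hphiu : Continuous fun t => phiF η (u t) := (phiF_cont η).comp hucont
  have hKm : Measurable fun t => g t * phiF η (u t) := hg.mul hphiu.measurable
  have hKb : ∀ t, |g t * phiF η (u t)| ≤ 1 := by
    intro t; rw [abs_mul]
    calc |g t| * |phiF η (u t)| ≤ 1 * 1 :=
          mul_le_mul (hb t) (phiF_abs_le η (u t)) (abs_nonneg _) zero_le_one
      _ = 1 := by ring
  have hKi : ∀ a b : ℝ, IntervalIntegrable (fun t => g t * phiF η (u t)) volume a b :=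
    bdd_intable hKm hKb
  have hulip : ∀ s t : ℝ, |u t - u s| ≤ |t - s| := by
    intro s t
    have h1 : u t - u s = ∫ τ in s..t, g τ :=
      integral_interval_sub_left (hgi 0 t) (hgi 0 s)
    rw [h1]
    have := intervalIntegral.norm_integral_le_of_norm_le_const
      (C := 1) (f := g) (a := s) (b := t) (fun x _ => by simpa [Real.norm_eq_abs] using hb x)
    simpa [Real.norm_eq_abs] using this
  -- ∀ ε > 0, 0 ≤ J + ε
  refine le_of_forall_pos_le_add ?_
  intro ε hε
  obtain ⟨n, hn⟩ := exists_nat_gt (η * T^2 / ε)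
  have hn0 : 0 < (n:ℝ) := lt_of_le_of_lt (by positivity) hn
  set δ : ℝ := T / n with hδ
  have hδ0 : 0 < δ := by positivity
  set a : ℕ → ℝ := fun i => i * δ with ha
  have haT : a n = T := by simp only [ha, hδ]; field_simp [hn0.ne']
  have ha0 : a 0 = 0 := by simp [ha]
  have hsum : ∑ i ∈ Finset.range n, ∫ t in a i..a (i+1), g t * phiF η (u t)
      = ∫ t in (0:ℝ)..T, g t * phiF η (u t) := by
    rw [intervalIntegral.sum_integral_adjacent_intervals (fun k _ => hKi _ _)]
    rw [ha0, haT]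
  -- per-piece lower bound
  have hpiece : ∀ i, (phiF η (u (a (i+1)))) * (u (a (i+1)) - u (a i)) - η * δ^2
      ≤ ∫ t in a i..a (i+1), g t * phiF η (u t) := by
    intro i
    have hle : a i ≤ a (i+1) := by
      simp only [ha]
      push_cast
      nlinarith [hδ0.le]
    have hconst : ∫ t in a i..a (i+1), g t * phiF η (u (a (i+1)))
        = phiF η (u (a (i+1))) * (u (a (i+1)) - u (a i)) := by
      rw [intervalIntegral.integral_mul_const]
      have h9 : (∫ t in a i..a (i+1), g t) = u (a (i+1)) - u (a i) :=
        (integral_interval_sub_left (hgi 0 _) (hgi 0 _)).symm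
      rw [h9]; ring
    have hdiff : |∫ t in a i..a (i+1), (g t * phiF η (u t) - g t * phiF η (u (a (i+1))))|
        ≤ η * δ * δ := by
      have hbd : ∀ x ∈ Set.uIoc (a i) (a (i+1)),
          ‖g x * phiF η (u x) - g x * phiF η (u (a (i+1)))‖ ≤ η * δ := by
        intro x hx
        rw [Set.uIoc_of_le hle] at hx
        have hxd : |x - a (i+1)| ≤ δ := by
          rw [abs_le]
          constructor
          · have : a (i+1) - a i = δ := by simp [ha]; ring
            linarith [hx.1, this]
          · linarith [hx.2, hδ0.le]
        calc ‖g x * phiF η (u x) - g x * phiF η (u (a (i+1)))‖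
            = |g x| * |phiF η (u x) - phiF η (u (a (i+1)))| := by
              rw [Real.norm_eq_abs, ← abs_mul]; ring_nf
          _ ≤ 1 * (η * |u x - u (a (i+1))|) :=
              mul_le_mul (hb x) (phiF_lip hη.le _ _) (abs_nonneg _) zero_le_one
          _ ≤ 1 * (η * |x - a (i+1)|) := by
              have := hulip (a (i+1)) x
              nlinarith [abs_nonneg (u x - u (a (i+1)))]
          _ ≤ η * δ := by rw [one_mul]; exact mul_le_mul_of_nonneg_left hxd hη.le
      have := intervalIntegral.norm_integral_le_of_norm_le_const hbd
      rw [Real.norm_eq_abs] at this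
      calc |∫ t in a i..a (i+1), (g t * phiF η (u t) - g t * phiF η (u (a (i+1))))|
          ≤ η * δ * |a (i+1) - a i| := this
        _ = η * δ * δ := by
            congr 1
            rw [abs_of_nonneg (by linarith)]
            simp [ha]; ring
    have hsplit : ∫ t in a i..a (i+1), g t * phiF η (u t)
        = (∫ t in a i..a (i+1), (g t * phiF η (u t) - g t * phiF η (u (a (i+1)))))
          + ∫ t in a i..a (i+1), g t * phiF η (u (a (i+1))) := by
      rw [← intervalIntegral.integral_add ((hKi _ _).sub ((hgi _ _).mul_const _))
        ((hgi _ _).mul_const _)]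
      congr 1; funext t; ring
    rw [hsplit, hconst]
    have := abs_le.1 hdiff
    nlinarith [this.1]
  -- telescoping
  have htel : PhiF η (u T) - PhiF η (u 0)
      ≤ ∑ i ∈ Finset.range n, (phiF η (u (a (i+1)))) * (u (a (i+1)) - u (a i)) := by
    have : ∀ i, PhiF η (u (a (i+1))) - PhiF η (u (a i))
        ≤ phiF η (u (a (i+1))) * (u (a (i+1)) - u (a i)) := fun i => PhiF_sub_le hη.le _ _
    calc PhiF η (u T) - PhiF η (u 0)
        = ∑ i ∈ Finset.range n, (PhiF η (u (a (i+1))) - PhiF η (u (a i))) := by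
          rw [Finset.sum_range_sub (fun i => PhiF η (u (a i))), ha0, haT]
      _ ≤ _ := Finset.sum_le_sum fun i _ => this i
  have hu0 : u 0 = 0 := by simp [hu]
  have hPhi0 : PhiF η 0 = 0 := by simp [PhiF]
  have hfinal : PhiF η (u T) - n * (η * δ^2)
      ≤ ∫ t in (0:ℝ)..T, g t * phiF η (u t) := by
    rw [← hsum]
    calc PhiF η (u T) - n * (η * δ^2)
        = (PhiF η (u T) - PhiF η (u 0)) - ∑ _i ∈ Finset.range n, η * δ^2 := by
          rw [hu0, hPhi0, Finset.sum_const, Finset.card_range, nsmul_eq_mul]; ring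
      _ ≤ (∑ i ∈ Finset.range n, (phiF η (u (a (i+1)))) * (u (a (i+1)) - u (a i)))
            - ∑ _i ∈ Finset.range n, η * δ^2 := by linarith [htel]
      _ = ∑ i ∈ Finset.range n, ((phiF η (u (a (i+1)))) * (u (a (i+1)) - u (a i)) - η * δ^2) := by
          rw [Finset.sum_sub_distrib]
      _ ≤ _ := Finset.sum_le_sum fun i _ => hpiece i
  have herr : (n:ℝ) * (η * δ^2) ≤ ε := by
    have h1 : (n:ℝ) * (η * δ^2) = η * T^2 / n := by rw [hδ]; field_simp
    rw [h1]
    rw [div_le_iff₀ hn0]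
    have h2 : η * T^2 / ε < n := hn
    rw [div_lt_iff₀ hε] at h2
    nlinarith
  have := PhiF_nonneg hη.le (u T)
  linarith [hfinal]


lemma payoff_eq (η : ℝ) (x : ℝ → Fin 2 → ℝ) (t : ℝ) :
    ∑ k, ∑ i, x t k * MP k i * contPlay η MP (fun _ => 0) x t i
    = -((x t 0 - x t 1) * phiF η (cumX x t 0 - cumX x t 1)) := by
  have e00 : MP 0 0 = 1 := by norm_num [MP]
  have e01 : MP 0 1 = -1 := by norm_num [MP]
  have e10 : MP 1 0 = -1 := by norm_num [MP]
  have e11 : MP 1 1 = 1 := by norm_num [MP]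
  simp only [contPlay, Fin.sum_univ_two, e00, e01, e10, e11]
  set c0 := cumX x t 0
  set c1 := cumX x t 1
  set p := x t 0
  set q := x t 1
  have h1 : Real.exp (η * (0 - (c0 * 1 + c1 * -1))) = Real.exp (-(η*(c0-c1))) := by ring_nf
  have h2 : Real.exp (η * (0 - (c0 * -1 + c1 * 1))) = Real.exp (η*(c0-c1)) := by ring_nf
  rw [h1, h2]
  set E := Real.exp (η*(c0-c1)) with hE
  have hEn : Real.exp (-(η*(c0-c1))) = E⁻¹ := Real.exp_neg _
  rw [hEn]
  have hE0 : 0 < E := Real.exp_pos _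
  have h2E : Real.exp (2*η*(c0-c1)) = E^2 := by
    rw [hE, ← Real.exp_nat_mul]; ring_nf
  rw [phiF, h2E]
  have hd1 : E⁻¹ + E ≠ 0 := by positivity
  have hd2 : E^2 + 1 ≠ 0 := by positivity
  field_simp
  ring


/-- in matching pennies, the optimal continuous-time reward against the
Replicator Dynamics is zero; equivalently, the maximum of
`(1/η)·[ln 2 − ln(e^{−ηT(x₁−x₂)} + e^{ηT(x₁−x₂)})]` over the simplex is `0`. -/
theorem stmt8 (η T : ℝ) (hη : 0 < η) (hT : 0 < T) :
    RcontStar η MP (fun _ => 0) T = 0 ∧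
    IsGreatest {v | ∃ x ∈ stdSimplex ℝ (Fin 2),
      v = (1/η) * (Real.log 2 -
        Real.log (Real.exp (-(η * T * (x 0 - x 1))) + Real.exp (η * T * (x 0 - x 1))))}
      0 := by

  classical
  -- abbreviations
  set S : Set ℝ := {r | ∃ x : ℝ → Fin 2 → ℝ, Measurable x ∧
    (∀ t ∈ Set.Icc (0:ℝ) T, x t ∈ stdSimplex ℝ (Fin 2)) ∧ r = Rcont η MP (fun _ => 0) T x}
    with hS
  -- the constant strategy (1/2, 1/2)
  have hhalf : (fun _ : ℝ => fun _ : Fin 2 => (1/2 : ℝ)) = fun _ => fun _ => (1/2:ℝ) := rfl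
  have hhalf_simplex : (fun _ : Fin 2 => (1/2:ℝ)) ∈ stdSimplex ℝ (Fin 2) := by
    constructor
    · intro i; norm_num
    · norm_num [Fin.sum_univ_two]
  have hRhalf : Rcont η MP (fun _ => 0) T (fun _ _ => (1/2:ℝ)) = 0 := by
    rw [Rcont]
    have : ∀ t : ℝ, ∑ k, ∑ i, (1/2:ℝ) * MP k i *
        contPlay η MP (fun _ => 0) (fun _ _ => (1/2:ℝ)) t i = 0 := by
      intro t
      rw [payoff_eq η (fun _ _ => (1/2:ℝ)) t]
      norm_num
    simp only [this]
    simp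
  have h0S : (0:ℝ) ∈ S := ⟨fun _ _ => 1/2, measurable_const,
    fun t _ => hhalf_simplex, hRhalf.symm⟩
  -- upper bound : every element of S is ≤ 0
  have hub : ∀ r ∈ S, r ≤ 0 := by
    rintro r ⟨x, hxm, hxs, rfl⟩
    -- truncate x outside [0,T]
    set x' : ℝ → Fin 2 → ℝ :=
      (Set.Icc (0:ℝ) T).piecewise x (fun _ _ => 1/2) with hx'
    have hx'm : Measurable x' := Measurable.piecewise measurableSet_Icc hxm measurable_const
    have hx's : ∀ t, x' t ∈ stdSimplex ℝ (Fin 2) := by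
      intro t
      by_cases ht : t ∈ Set.Icc (0:ℝ) T
      · rw [hx', Set.piecewise_eq_of_mem _ _ _ ht]; exact hxs t ht
      · rw [hx', Set.piecewise_eq_of_notMem _ _ _ ht]; exact hhalf_simplex
    have hx'bd : ∀ t k, 0 ≤ x' t k ∧ x' t k ≤ 1 := by
      intro t k
      obtain ⟨hpos, hsum⟩ := hx's t
      rw [Fin.sum_univ_two] at hsum
      have h0 := hpos 0
      have h1 := hpos 1
      refine ⟨hpos k, ?_⟩
      have hk : x' t k = x' t 0 ∨ x' t k = x' t 1 := by
        fin_cases k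
        · exact Or.inl rfl
        · exact Or.inr rfl
      rcases hk with h | h <;> rw [h] <;> linarith
    have hx'k : ∀ (k : Fin 2) (a b : ℝ), IntervalIntegrable (fun s => x' s k) volume a b := by
      intro k a b
      apply bdd_intable ((measurable_pi_apply k).comp hx'm)
      intro t
      obtain ⟨h1, h2⟩ := hx'bd t k
      rw [abs_le]; constructor <;> simp <;> linarith
    set g : ℝ → ℝ := fun t => x' t 0 - x' t 1 with hg
    have hgm : Measurable g :=
      ((measurable_pi_apply 0).comp hx'm).sub ((measurable_pi_apply 1).comp hx'm)
    have hgb : ∀ t, |g t| ≤ 1 := by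
      intro t
      obtain ⟨h1, h2⟩ := hx'bd t 0
      obtain ⟨h3, h4⟩ := hx'bd t 1
      obtain ⟨hpos, hsum⟩ := hx's t
      rw [Fin.sum_univ_two] at hsum
      rw [abs_le]; constructor <;> simp only [hg] <;> linarith
    -- x and x' give the same reward
    have hxx' : ∀ t ∈ Set.Icc (0:ℝ) T, x t = x' t := by
      intro t ht
      rw [hx', Set.piecewise_eq_of_mem _ _ _ ht]
    have hcum : ∀ t ∈ Set.Icc (0:ℝ) T, ∀ k, cumX x t k = cumX x' t k := by
      intro t ht k
      apply intervalIntegral.integral_congr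
      intro s hs
      rw [Set.uIcc_of_le ht.1] at hs
      have hsmem : s ∈ Set.Icc (0:ℝ) T := ⟨hs.1, le_trans hs.2 ht.2⟩
      simp only [hxx' s hsmem]
    have hReq : Rcont η MP (fun _ => 0) T x = Rcont η MP (fun _ => 0) T x' := by
      rw [Rcont, Rcont]
      apply intervalIntegral.integral_congr
      intro t ht
      rw [Set.uIcc_of_le hT.le] at ht
      have h1 := hxx' t ht
      have h2 := hcum t ht
      simp only [contPlay, h1, h2]
    rw [hReq, Rcont]
    have hint : ∀ t : ℝ, ∑ k, ∑ i, x' t k * MP k i * contPlay η MP (fun _ => 0) x' t i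
        = -(g t * phiF η (∫ s in (0:ℝ)..t, g s)) := by
      intro t
      rw [payoff_eq η x' t]
      have : cumX x' t 0 - cumX x' t 1 = ∫ s in (0:ℝ)..t, g s := by
        rw [cumX, cumX, hg, ← intervalIntegral.integral_sub (hx'k 0 0 t) (hx'k 1 0 t)]
      rw [this]
    simp only [hint]
    rw [intervalIntegral.integral_neg]
    have := key_ineq η T hη hT g hgm hgb
    linarith
  constructor
  · -- RcontStar = 0
    rw [RcontStar]
    exact IsGreatest.csSup_eq ⟨h0S, hub⟩
  · -- IsGreatest of the closed-form set
    constructor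
    · refine ⟨fun _ => 1/2, hhalf_simplex, ?_⟩
      norm_num [Real.exp_zero]
    · rintro v ⟨x, hx, rfl⟩
      have hc : ∀ c : ℝ, (2:ℝ) ≤ Real.exp (-c) + Real.exp c := by
        intro c
        have h1 := Real.add_one_le_exp c
        have h2 := Real.add_one_le_exp (-c)
        nlinarith [Real.exp_pos c, Real.exp_pos (-c), sq_nonneg (Real.exp c - 1)]
      have h2 : Real.log 2 ≤ Real.log (Real.exp (-(η * T * (x 0 - x 1)))
          + Real.exp (η * T * (x 0 - x 1))) := by
        apply Real.log_le_log (by norm_num) (hc _)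
      have h3 : (0:ℝ) ≤ 1/η := by positivity
      have := mul_nonpos_of_nonneg_of_nonpos h3 (by linarith : Real.log 2 -
        Real.log (Real.exp (-(η * T * (x 0 - x 1))) + Real.exp (η * T * (x 0 - x 1))) ≤ 0)
      linarith
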